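/- Injectivity of the Circular Radon Transform on Systems of Lines (Theorem 4.1, functional form): Let d, k ≥ 1 and let α : ℝ^d × (ℝ^d × S^{d-1})^k → Δ_{k-1} be an E(d)-invariant splitting map. Suppose f, g : ℝ^d → ℝ are Lebesgue integrable and that for every system of k lines 𝓛 = ((x_1,θ_1),…,(x_k,θ_k)), every r ≥ 0, every index i ∈ {1,…,k}, and every bounded continuous function φ : ℝ → ℝ one has ∫_{ℝ^d} f(y)·α(y,𝓛)_i·φ(‖y − x_i − r·θ_i‖) dy = ∫_{ℝ^d} g(y)·α(y,𝓛)_i·φ(‖y − x_i − r·θ_i‖) dy. Then f = g Lebesgue-almost everywhere. -/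

import Mathlib

open MeasureTheory
open scoped InnerProductSpace

noncomputable section

/-- `d`-dimensional Euclidean space. -/
abbrev Euc (d : ℕ) := EuclideanSpace ℝ (Fin d)

/-- The unit sphere `S^{d-1}` in `ℝ^d`. -/
abbrev Sph (d : ℕ) := Metric.sphere (0 : Euc d) 1

/-- A system of `k` lines in `ℝ^d`: each line is a pair (source, direction). -/
abbrev LineSystem (d k : ℕ) := Fin k → Euc d × Sph d

/-- The action of a linear isometry equivalence on the unit sphere. -/
def sphIso {d : ℕ} (Q : Euc d ≃ₗᵢ[ℝ] Euc d) (θ : Sph d) : Sph d :=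
  ⟨Q (θ : Euc d), by
    rw [mem_sphere_zero_iff_norm, Q.norm_map]
    exact mem_sphere_zero_iff_norm.mp θ.2⟩

/-- The action of the Euclidean group `E(d)` (an isometry `Q` together with a
translation `a`) on a system of lines. -/
def actLine {d k : ℕ} (Q : Euc d ≃ₗᵢ[ℝ] Euc d) (a : Euc d) (L : LineSystem d k) :
    LineSystem d k :=
  fun i => (Q (L i).1 + a, sphIso Q (L i).2)

/-- Injectivity of the Circular Radon Transform on Systems of Lines
(functional form). -/
theorem circular_radon_transform_systems_of_lines_injective
    (d k : ℕ) (hd : 1 ≤ d) (hk : 1 ≤ k)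
    (α : Euc d × LineSystem d k → Fin k → ℝ)
    (hα_cont : Continuous α)
    (hα_simplex : ∀ p, α p ∈ stdSimplex ℝ (Fin k))
    (hα_inv : ∀ (Q : Euc d ≃ₗᵢ[ℝ] Euc d) (a y : Euc d) (L : LineSystem d k),
      α (Q y + a, actLine Q a L) = α (y, L))
    (f g : Euc d → ℝ)
    (hf : Integrable f) (hg : Integrable g)
    (heq : ∀ (L : LineSystem d k) (r : ℝ), 0 ≤ r → ∀ (i : Fin k) (φ : ℝ → ℝ),
      Continuous φ → (∃ C, ∀ t, |φ t| ≤ C) →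
      ∫ y, f y * α (y, L) i * φ (‖y - (L i).1 - r • ((L i).2 : Euc d)‖)
        = ∫ y, g y * α (y, L) i * φ (‖y - (L i).1 - r • ((L i).2 : Euc d)‖)) :
  f =ᵐ[volume] g := by
  classical
  -- A unit vector in `ℝ^d`.
  have hθnorm : ‖(EuclideanSpace.single (⟨0, hd⟩ : Fin d) (1 : ℝ) : Euc d)‖ = 1 := by
    simp [EuclideanSpace.norm_single]
  set θ₀ : Sph d := ⟨EuclideanSpace.single ⟨0, hd⟩ (1 : ℝ),
    mem_sphere_zero_iff_norm.mpr hθnorm⟩ with hθ₀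
  -- Key step: integrals against radial test functions agree, for every center.
  have hkey : ∀ (c : Euc d) (φ : ℝ → ℝ), Continuous φ → (∃ C, ∀ t, |φ t| ≤ C) →
      ∫ y, f y * φ ‖y - c‖ = ∫ y, g y * φ ‖y - c‖ := by
    intro c φ hφ hbd
    set L : LineSystem d k := fun _ => (c, θ₀) with hL
    have h0 : ∀ i : Fin k, ∫ y, f y * α (y, L) i * φ ‖y - c‖
        = ∫ y, g y * α (y, L) i * φ ‖y - c‖ := by
      intro i
      have := heq L 0 le_rfl i φ hφ hbd
      simpa [L, zero_smul, sub_zero] using this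
    obtain ⟨C, hC⟩ := hbd
    have hC0 : 0 ≤ C := le_trans (abs_nonneg _) (hC 0)
    have hα01 : ∀ (p : Euc d × LineSystem d k) (i : Fin k), |α p i| ≤ 1 := by
      intro p i
      have h1 := (hα_simplex p).1
      have h2 := (hα_simplex p).2
      rw [abs_of_nonneg (h1 i)]
      calc α p i ≤ ∑ j, α p j :=
            Finset.single_le_sum (fun j _ => h1 j) (Finset.mem_univ i)
        _ = 1 := h2
    have hmul : ∀ (u : Euc d → ℝ), Integrable u → ∀ i : Fin k,
        Integrable (fun y => u y * α (y, L) i * φ ‖y - c‖) := by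
      intro u hu i
      have hcont : Continuous (fun y : Euc d => α (y, L) i * φ ‖y - c‖) := by
        refine Continuous.mul ?_ (hφ.comp (continuous_id.sub continuous_const).norm)
        exact (continuous_apply i).comp (hα_cont.comp (continuous_id.prodMk continuous_const))
      have h1 : Integrable (fun y => (α (y, L) i * φ ‖y - c‖) * u y) := by
        refine hu.bdd_mul hcont.aestronglyMeasurable (c := C) (Filter.Eventually.of_forall fun y => ?_)
        rw [Real.norm_eq_abs, abs_mul]
        calc |α (y, L) i| * |φ ‖y - c‖| ≤ 1 * C :=
              mul_le_mul (hα01 _ i) (hC _) (abs_nonneg _) zero_le_one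
          _ = C := one_mul C
      have hrw : (fun y => u y * α (y, L) i * φ ‖y - c‖)
          = fun y => (α (y, L) i * φ ‖y - c‖) * u y := by
        funext y; ring
      rw [hrw]; exact h1
    have hsum : ∀ (u : Euc d → ℝ), Integrable u →
        ∫ y, u y * φ ‖y - c‖ = ∑ i : Fin k, ∫ y, u y * α (y, L) i * φ ‖y - c‖ := by
      intro u hu
      rw [← integral_finset_sum _ (fun i _ => hmul u hu i)]
      congr 1; funext y
      rw [← Finset.sum_mul, ← Finset.mul_sum, (hα_simplex (y, L)).2, mul_one]
    rw [hsum f hf, hsum g hg]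
    exact Finset.sum_congr rfl fun i _ => h0 i
  -- Integrals over all closed balls agree.
  have hball : ∀ (x : Euc d) (R : ℝ),
      ∫ y in Metric.closedBall x R, f y = ∫ y in Metric.closedBall x R, g y := by
    intro x R
    set φn : ℕ → ℝ → ℝ :=
      fun n t => max 0 (min 1 ((R + 1 / (n + 1) - t) * (n + 1))) with hφn
    have hφn_cont : ∀ n, Continuous (φn n) := by
      intro n
      exact continuous_const.max (continuous_const.min
        (((continuous_const.sub continuous_id).mul continuous_const)))
    have hφn_bd : ∀ n, ∃ C, ∀ t, |φn n t| ≤ C := by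
      intro n
      refine ⟨1, fun t => ?_⟩
      rw [abs_of_nonneg (le_max_left _ _)]
      exact max_le zero_le_one (min_le_left _ _)
    have hφn_le_one : ∀ n t, φn n t ≤ 1 := fun n t =>
      max_le zero_le_one (min_le_left _ _)
    have hφn_nonneg : ∀ n t, 0 ≤ φn n t := fun n t => le_max_left _ _
    -- pointwise convergence to the indicator of the closed ball
    have hconv : ∀ y : Euc d, Filter.Tendsto (fun n => φn n ‖y - x‖) Filter.atTop
        (nhds (Set.indicator (Metric.closedBall x R) (fun _ => (1 : ℝ)) y)) := by
      intro y
      by_cases hy : y ∈ Metric.closedBall x R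
      · have ht : ‖y - x‖ ≤ R := by
          rwa [Metric.mem_closedBall, dist_eq_norm] at hy
        have : ∀ n, φn n ‖y - x‖ = 1 := by
          intro n
          have hpos : (0 : ℝ) < (n : ℝ) + 1 := by positivity
          have h1 : (1 : ℝ) ≤ (R + 1 / (n + 1) - ‖y - x‖) * (n + 1) := by
            have : 1 / ((n : ℝ) + 1) ≤ R + 1 / (n + 1) - ‖y - x‖ := by linarith
            calc (1 : ℝ) = 1 / ((n : ℝ) + 1) * (n + 1) := by
                  field_simp
              _ ≤ (R + 1 / (n + 1) - ‖y - x‖) * (n + 1) :=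
                  mul_le_mul_of_nonneg_right this hpos.le
          show max 0 (min 1 ((R + 1 / (n + 1) - ‖y - x‖) * (n + 1))) = 1
          rw [min_eq_left h1, max_eq_right zero_le_one]
        rw [Set.indicator_of_mem hy]
        simp only [this]
        exact tendsto_const_nhds
      · have ht : R < ‖y - x‖ := by
          rw [Metric.mem_closedBall, dist_eq_norm, not_le] at hy
          exact hy
        rw [Set.indicator_of_notMem hy]
        have hev : ∀ᶠ n : ℕ in Filter.atTop, φn n ‖y - x‖ = 0 := by
          have : ∀ᶠ n : ℕ in Filter.atTop, 1 / ((n : ℝ) + 1) < ‖y - x‖ - R := by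
            have := tendsto_one_div_add_atTop_nhds_zero_nat (𝕜 := ℝ)
            exact this.eventually_lt_const (by linarith)
          filter_upwards [this] with n hn
          have hneg : (R + 1 / (n + 1) - ‖y - x‖) * ((n : ℝ) + 1) ≤ 0 := by
            apply mul_nonpos_of_nonpos_of_nonneg
            · linarith
            · positivity
          have : min 1 ((R + 1 / (n + 1) - ‖y - x‖) * ((n : ℝ) + 1)) ≤ 0 :=
            le_trans (min_le_right _ _) hneg
          show max 0 (min 1 ((R + 1 / (n + 1) - ‖y - x‖) * ((n:ℝ) + 1))) = 0
          rw [max_eq_left this]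
        exact Filter.Tendsto.congr' (Filter.eventuallyEq_of_mem hev (fun n h => h.symm))
          tendsto_const_nhds
    -- dominated convergence
    have hDCT : ∀ (u : Euc d → ℝ), Integrable u →
        Filter.Tendsto (fun n => ∫ y, u y * φn n ‖y - x‖) Filter.atTop
          (nhds (∫ y, u y * Set.indicator (Metric.closedBall x R) (fun _ => (1:ℝ)) y)) := by
      intro u hu
      have hFint : ∀ n, Integrable (fun y => u y * φn n ‖y - x‖) := by
        intro n
        have hcont : Continuous fun y : Euc d => φn n ‖y - x‖ :=
          (hφn_cont n).comp ((continuous_id.sub continuous_const).norm)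
        have h1 : Integrable (fun y => (φn n ‖y - x‖) * u y) := by
          refine hu.bdd_mul hcont.aestronglyMeasurable (c := 1) (Filter.Eventually.of_forall fun y => ?_)
          rw [Real.norm_eq_abs, abs_of_nonneg (hφn_nonneg n _)]
          exact hφn_le_one n _
        have hrw : (fun y => u y * φn n ‖y - x‖) = fun y => (φn n ‖y - x‖) * u y := by
          funext y; ring
        rw [hrw]; exact h1
      apply tendsto_integral_of_dominated_convergence (fun y => |u y|)
      · intro n; exact (hFint n).aestronglyMeasurable
      · exact hu.abs
      · intro n
        refine Filter.Eventually.of_forall fun y => ?_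
        rw [Real.norm_eq_abs, abs_mul]
        calc |u y| * |φn n ‖y - x‖| ≤ |u y| * 1 := by
              refine mul_le_mul_of_nonneg_left ?_ (abs_nonneg _)
              rw [abs_of_nonneg (hφn_nonneg n _)]; exact hφn_le_one n _
          _ = |u y| := mul_one _
      · exact Filter.Eventually.of_forall fun y => (hconv y).const_mul (u y)
    have hind : ∀ (u : Euc d → ℝ),
        ∫ y, u y * Set.indicator (Metric.closedBall x R) (fun _ => (1:ℝ)) y
          = ∫ y in Metric.closedBall x R, u y := by
      intro u
      rw [← integral_indicator measurableSet_closedBall]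
      congr 1; funext y
      by_cases hy : y ∈ Metric.closedBall x R <;>
        simp [Set.indicator_of_mem, Set.indicator_of_notMem, hy]
    have hfg : ∀ n, ∫ y, f y * φn n ‖y - x‖ = ∫ y, g y * φn n ‖y - x‖ :=
      fun n => hkey x (φn n) (hφn_cont n) (hφn_bd n)
    have hlim := tendsto_nhds_unique
      (Filter.Tendsto.congr (fun n => hfg n) (hDCT f hf)) (hDCT g hg)
    rw [← hind f, ← hind g, hlim]
  -- Lebesgue differentiation
  set h : Euc d → ℝ := fun y => f y - g y with hh
  have hint : Integrable h := hf.sub hg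
  have hzero : ∀ (x : Euc d) (r : ℝ), ∫ y in Metric.closedBall x r, h y = 0 := by
    intro x r
    rw [hh]
    rw [integral_sub hf.integrableOn hg.integrableOn, hball x r, sub_self]
  have hdiff := IsUnifLocDoublingMeasure.ae_tendsto_average (μ := (volume : Measure (Euc d)))
    hint.locallyIntegrable 1
  have hsub : ∀ᵐ x ∂(volume : Measure (Euc d)), h x = 0 := by
    filter_upwards [hdiff] with x hx
    have hev : ∀ᶠ r : ℝ in nhdsWithin 0 (Set.Ioi 0),
        x ∈ Metric.closedBall x (1 * r) := by
      filter_upwards [self_mem_nhdsWithin] with r hr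
      simp only [one_mul, Metric.mem_closedBall, dist_self]
      exact le_of_lt hr
    have h1 : Filter.Tendsto (fun r : ℝ => ⨍ y in Metric.closedBall x r, h y)
        (nhdsWithin 0 (Set.Ioi 0)) (nhds (h x)) := hx (fun _ => x) id Filter.tendsto_id hev
    have h2 : (fun r : ℝ => ⨍ y in Metric.closedBall x r, h y) = fun _ => (0 : ℝ) := by
      funext r
      rw [setAverage_eq, hzero, smul_zero]
    rw [h2] at h1
    exact tendsto_nhds_unique h1 tendsto_const_nhds
  filter_upwards [hsub] with x hx
  have : f x - g x = 0 := hx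
  linarith
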